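/- Let ω ⊆ ℝ² be open, h > 0, and d ∈ ℝ. Let H₁, H₂ : ℝ² → ℝ be C¹ functions satisfying ∂_x H₂ = ∂_y H₁ and ∂_x H₁ + ∂_y H₂ = 0 on ω (i.e. (H₁,H₂) is a harmonic 1-form on ω), and let u : ℝ → ℝ be C² with −u'' = d·u on [0,h] and u(0) = u(h) = 0. Define F : ℝ³ → ℝ³ by F(x,y,t) := (u(t)·H₁(x,y), u(t)·H₂(x,y), 0). Then on ω × (0,h): div F = 0 and curl (curl F) = d·F. Moreover F vanishes identically on the horizontal faces ω × {0,h}, so in particular e₃ × F = 0 there. -/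

import Mathlib

noncomputable section

/-- Partial derivative in the first variable `x` of `g : ℝ³ → ℝ`, points written `(x, y, t)`. -/
def pdx (g : ℝ × ℝ × ℝ → ℝ) (p : ℝ × ℝ × ℝ) : ℝ :=
  deriv (fun s => g (s, p.2.1, p.2.2)) p.1

/-- Partial derivative in the second variable `y`. -/
def pdy (g : ℝ × ℝ × ℝ → ℝ) (p : ℝ × ℝ × ℝ) : ℝ :=
  deriv (fun s => g (p.1, s, p.2.2)) p.2.1

/-- Partial derivative in the third variable `t`. -/
def pdt (g : ℝ × ℝ × ℝ → ℝ) (p : ℝ × ℝ × ℝ) : ℝ :=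
  deriv (fun s => g (p.1, p.2.1, s)) p.2.2

/-- curl F = (∂_y F₃ − ∂_t F₂, ∂_t F₁ − ∂_x F₃, ∂_x F₂ − ∂_y F₁). -/
def curl3 (F : ℝ × ℝ × ℝ → ℝ × ℝ × ℝ) (p : ℝ × ℝ × ℝ) : ℝ × ℝ × ℝ :=
  (pdy (fun q => (F q).2.2) p - pdt (fun q => (F q).2.1) p,
   pdt (fun q => (F q).1) p - pdx (fun q => (F q).2.2) p,
   pdx (fun q => (F q).2.1) p - pdy (fun q => (F q).1) p)

/-- div F = ∂_x F₁ + ∂_y F₂ + ∂_t F₃. -/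
def div3 (F : ℝ × ℝ × ℝ → ℝ × ℝ × ℝ) (p : ℝ × ℝ × ℝ) : ℝ :=
  pdx (fun q => (F q).1) p + pdy (fun q => (F q).2.1) p + pdt (fun q => (F q).2.2) p

/-- ∇g = (∂_x g, ∂_y g, ∂_t g). -/
def grad3 (g : ℝ × ℝ × ℝ → ℝ) (p : ℝ × ℝ × ℝ) : ℝ × ℝ × ℝ :=
  (pdx g p, pdy g p, pdt g p)

/-- Scalar Laplacian Δ₃ g = ∂_xx g + ∂_yy g + ∂_tt g. -/
def lap3 (g : ℝ × ℝ × ℝ → ℝ) (p : ℝ × ℝ × ℝ) : ℝ :=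
  pdx (pdx g) p + pdy (pdy g) p + pdt (pdt g) p

/-- Componentwise (vector) Laplacian ΔF = (Δ₃F₁, Δ₃F₂, Δ₃F₃). -/
def vecLap (F : ℝ × ℝ × ℝ → ℝ × ℝ × ℝ) (p : ℝ × ℝ × ℝ) : ℝ × ℝ × ℝ :=
  (lap3 (fun q => (F q).1) p, lap3 (fun q => (F q).2.1) p, lap3 (fun q => (F q).2.2) p)

/-- Partial derivative in `x` for `g : ℝ² → ℝ`. -/
def pdx2 (g : ℝ × ℝ → ℝ) (p : ℝ × ℝ) : ℝ :=
  deriv (fun s => g (s, p.2)) p.1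

/-- Partial derivative in `y` for `g : ℝ² → ℝ`. -/
def pdy2 (g : ℝ × ℝ → ℝ) (p : ℝ × ℝ) : ℝ :=
  deriv (fun s => g (p.1, s)) p.2

/-- Cross product on ℝ³ = ℝ × ℝ × ℝ. -/
def cross3 (a b : ℝ × ℝ × ℝ) : ℝ × ℝ × ℝ :=
  (a.2.1 * b.2.2 - a.2.2 * b.2.1,
   a.2.2 * b.1 - a.1 * b.2.2,
   a.1 * b.2.1 - a.2.1 * b.1)

/-- the TEM-family `F = (u·H₁, u·H₂, 0)`, with `(H₁,H₂)` a harmonic 1-form on `ω`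
(`∂ₓH₂ = ∂_yH₁` and `∂ₓH₁ + ∂_yH₂ = 0` on `ω`) and `u` a Dirichlet eigenfunction on `(0,h)`
with eigenvalue `d`, is divergence free and satisfies `curl curl F = d·F` on `ω × (0,h)`;
moreover `F` vanishes identically on the horizontal faces `ω × {0,h}`, so `e₃ × F = 0` there. -/
theorem TEM_mode_eigenfunction (ω : Set (ℝ × ℝ)) (hω : IsOpen ω) (h : ℝ) (hh : 0 < h)
    (d : ℝ) (H₁ H₂ : ℝ × ℝ → ℝ) (u : ℝ → ℝ)
    (hH₁ : ContDiff ℝ 1 H₁) (hH₂ : ContDiff ℝ 1 H₂) (hu : ContDiff ℝ 2 u)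
    (hclosed : ∀ q ∈ ω, pdx2 H₂ q = pdy2 H₁ q)
    (hcoclosed : ∀ q ∈ ω, pdx2 H₁ q + pdy2 H₂ q = 0)
    (hueig : ∀ t ∈ Set.Icc (0 : ℝ) h, -(deriv (deriv u) t) = d * u t)
    (hu0 : u 0 = 0) (huh : u h = 0)
    (F : ℝ × ℝ × ℝ → ℝ × ℝ × ℝ)
    (hF : F = fun p =>
      (u p.2.2 * H₁ (p.1, p.2.1),
       u p.2.2 * H₂ (p.1, p.2.1),
       (0 : ℝ))) :
    (∀ p : ℝ × ℝ × ℝ, (p.1, p.2.1) ∈ ω → p.2.2 ∈ Set.Ioo (0 : ℝ) h →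
      div3 F p = 0 ∧ curl3 (curl3 F) p = d • F p) ∧
    (∀ p : ℝ × ℝ × ℝ, (p.1, p.2.1) ∈ ω → (p.2.2 = 0 ∨ p.2.2 = h) →
      F p = 0 ∧ cross3 ((0 : ℝ), (0 : ℝ), (1 : ℝ)) (F p) = 0) := by
  subst hF
  have hωx : ∀ x y : ℝ, (x, y) ∈ ω → ∀ᶠ s in nhds x, (s, y) ∈ ω := by
    intro x y hxy
    have : Continuous fun s : ℝ => (s, y) := by continuity
    exact this.continuousAt.preimage_mem_nhds (hω.mem_nhds hxy)
  have hωy : ∀ x y : ℝ, (x, y) ∈ ω → ∀ᶠ s in nhds y, (x, s) ∈ ω := by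
    intro x y hxy
    have : Continuous fun s : ℝ => (x, s) := by continuity
    exact this.continuousAt.preimage_mem_nhds (hω.mem_nhds hxy)
  have hG : curl3 (fun p : ℝ × ℝ × ℝ =>
      (u p.2.2 * H₁ (p.1, p.2.1), u p.2.2 * H₂ (p.1, p.2.1), (0 : ℝ)))
      = fun q : ℝ × ℝ × ℝ =>
      (-(deriv u q.2.2 * H₂ (q.1, q.2.1)),
       deriv u q.2.2 * H₁ (q.1, q.2.1),
       u q.2.2 * (pdx2 H₂ (q.1, q.2.1) - pdy2 H₁ (q.1, q.2.1))) := by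
    funext q
    simp only [curl3, pdx, pdy, pdt, pdx2, pdy2, Prod.mk.injEq]
    simp only [deriv_const']
    rw [deriv_mul_const_field, deriv_const_mul_field, deriv_const_mul_field,
      deriv_mul_const_field]
    refine ⟨by ring, by ring, by ring⟩
  constructor
  · rintro ⟨x, y, t⟩ hxy ht
    have htI : t ∈ Set.Icc (0 : ℝ) h := ⟨ht.1.le, ht.2.le⟩
    constructor
    · simp only [div3, pdx, pdy, pdt]
      rw [deriv_const, deriv_const_mul_field, deriv_const_mul_field]
      have := hcoclosed (x, y) hxy
      simp only [pdx2, pdy2] at this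
      calc u t * deriv (fun s => H₁ (s, y)) x + u t * deriv (fun s => H₂ (x, s)) y + 0
          = u t * (deriv (fun s => H₁ (s, y)) x + deriv (fun s => H₂ (x, s)) y) := by ring
        _ = 0 := by rw [this]; ring
    · rw [hG]
      have hzx : deriv (fun s => u t * (pdx2 H₂ (s, y) - pdy2 H₁ (s, y))) x = 0 := by
        have hev : (fun s => u t * (pdx2 H₂ (s, y) - pdy2 H₁ (s, y)))
            =ᶠ[nhds x] fun _ => (0 : ℝ) := by
          filter_upwards [hωx x y hxy] with s hs
          rw [hclosed (s, y) hs]; ring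
        rw [hev.deriv_eq, deriv_const]
      have hzy : deriv (fun s => u t * (pdx2 H₂ (x, s) - pdy2 H₁ (x, s))) y = 0 := by
        have hev : (fun s => u t * (pdx2 H₂ (x, s) - pdy2 H₁ (x, s)))
            =ᶠ[nhds y] fun _ => (0 : ℝ) := by
          filter_upwards [hωy x y hxy] with s hs
          rw [hclosed (x, s) hs]; ring
        rw [hev.deriv_eq, deriv_const]
      have hdd : deriv (deriv u) t = -(d * u t) := by
        have := hueig t htI; linarith
      have hco := hcoclosed (x, y) hxy
      simp only [pdx2, pdy2] at hco
      simp only [curl3, pdx, pdy, pdt, Prod.mk.injEq, Prod.smul_mk, smul_eq_mul,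
        Prod.mk.injEq]
      refine ⟨?_, ?_, ?_⟩
      · rw [hzy, deriv_mul_const_field, hdd]; ring
      · rw [hzx]
        have : deriv (fun s => -(deriv u s * H₂ (x, y))) t
            = -(deriv (deriv u) t * H₂ (x, y)) := by
          rw [deriv.fun_neg, deriv_mul_const_field]
        rw [this, hdd]; ring
      · rw [deriv_const_mul_field]
        have : deriv (fun s => -(deriv u t * H₂ (x, s))) y
            = -(deriv u t * deriv (fun s => H₂ (x, s)) y) := by
          rw [deriv.fun_neg, deriv_const_mul_field]
        rw [this]
        calc deriv u t * deriv (fun s => H₁ (s, y)) x -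
              -(deriv u t * deriv (fun s => H₂ (x, s)) y)
            = deriv u t * (deriv (fun s => H₁ (s, y)) x + deriv (fun s => H₂ (x, s)) y) := by
              ring
          _ = d * 0 := by rw [hco]; ring
  · rintro ⟨x, y, t⟩ hxy (rfl | rfl) <;>
      simp [cross3, hu0, huh]
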